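/- arXiv:2407.07130 — 2 statements merged into one kernel-verified Lean document; each statement's English description precedes it below -/
import Mathlib

section
/- The family (k₁,k₂) ↦ (−1)^{k₂}/(k₁·k₂²), indexed by pairs of positive integers with k₁ < k₂, is absolutely summable, and ∑_{0<k₁<k₂} (−1)^{k₂}/(k₁·k₂²) = (1/8)·ζ(3). (This is the alternating multiple zeta value ζ(1,2̄).) -/
open Finset Filter

noncomputable def Hh (k : ℕ) : ℝ := ∑ j ∈ Finset.range k, 1 / ((j : ℝ) + 1)

lemma tendsto_aux (t : ℕ) :
    Tendsto (fun N : ℕ => 1 / ((N : ℝ) + t + 1)) atTop (nhds 0) := by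
  have hN : Tendsto (fun N : ℕ => ((N : ℝ) + t + 1)) atTop atTop :=
    Filter.tendsto_atTop_add_const_right _ 1
      (Filter.tendsto_atTop_add_const_right _ (t : ℝ) tendsto_natCast_atTop_atTop)
  simpa only [one_div, Function.comp_def] using tendsto_inv_atTop_zero.comp hN

lemma tele_single (t : ℕ) :
    HasSum (fun i : ℕ => 1 / ((i : ℝ) + t + 1) - 1 / ((i : ℝ) + t + 2)) (1 / ((t : ℝ) + 1)) := by
  set g : ℕ → ℝ := fun i => 1 / ((i : ℝ) + t + 1) with hg
  set f : ℕ → ℝ := fun i => 1 / ((i : ℝ) + t + 1) - 1 / ((i : ℝ) + t + 2) with hf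
  have hfg : ∀ i, f i = g i - g (i + 1) := by
    intro i; simp only [hf, hg]; push_cast; ring
  have hnn : ∀ i, 0 ≤ f i := by
    intro i
    have h1 : (0:ℝ) < (i : ℝ) + t + 1 := by positivity
    have h2 : ((i : ℝ) + t + 1) ≤ ((i : ℝ) + t + 2) := by linarith
    simp only [hf, sub_nonneg]
    gcongr
  have hps : ∀ N : ℕ, ∑ i ∈ range N, f i = 1 / ((t : ℝ) + 1) - 1 / ((N : ℝ) + t + 1) := by
    intro N
    calc ∑ i ∈ range N, f i = ∑ i ∈ range N, (g i - g (i + 1)) :=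
          Finset.sum_congr rfl fun i _ => hfg i
      _ = g 0 - g N := Finset.sum_range_sub' g N
      _ = 1 / ((t : ℝ) + 1) - 1 / ((N : ℝ) + t + 1) := by simp [hg]
  have hsummable : Summable f := by
    apply summable_of_sum_range_le hnn (c := 1 / ((t : ℝ) + 1))
    intro N
    rw [hps N]
    have : (0:ℝ) ≤ 1 / ((N : ℝ) + t + 1) := by positivity
    linarith
  have htend : Tendsto (fun N : ℕ => ∑ i ∈ range N, f i) atTop
      (nhds (1 / ((t : ℝ) + 1))) := by
    simp only [hps]
    simpa using (tendsto_const_nhds (x := 1 / ((t : ℝ) + 1))).sub (tendsto_aux t)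
  exact (hsummable.hasSum_iff_tendsto_nat).mpr htend

lemma tele_k (k : ℕ) (hk : 0 < k) :
    HasSum (fun i : ℕ => 1 / (((i : ℝ) + 1) * ((i : ℝ) + k + 1))) (Hh k / k) := by
  have h1 : HasSum (fun i : ℕ => ∑ t ∈ range k, (1 / ((i : ℝ) + t + 1) - 1 / ((i : ℝ) + t + 2)))
      (∑ t ∈ range k, 1 / ((t : ℝ) + 1)) :=
    hasSum_sum fun t _ => tele_single t
  have h2 : ∀ i : ℕ, ∑ t ∈ range k, (1 / ((i : ℝ) + t + 1) - 1 / ((i : ℝ) + t + 2))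
      = 1 / ((i : ℝ) + 1) - 1 / ((i : ℝ) + k + 1) := by
    intro i
    set F : ℕ → ℝ := fun t => 1 / ((i : ℝ) + t + 1) with hF
    calc ∑ t ∈ range k, (1 / ((i : ℝ) + t + 1) - 1 / ((i : ℝ) + t + 2))
        = ∑ t ∈ range k, (F t - F (t + 1)) :=
          Finset.sum_congr rfl fun t _ => by simp only [hF]; push_cast; ring
      _ = F 0 - F k := Finset.sum_range_sub' F k
      _ = 1 / ((i : ℝ) + 1) - 1 / ((i : ℝ) + k + 1) := by simp [hF]
  rw [funext h2] at h1
  have h3 := h1.mul_left (1 / (k : ℝ))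
  have h4 : (fun i : ℕ => 1 / (k : ℝ) * (1 / ((i : ℝ) + 1) - 1 / ((i : ℝ) + k + 1)))
      = fun i : ℕ => 1 / (((i : ℝ) + 1) * ((i : ℝ) + k + 1)) := by
    funext i
    have hk' : (k : ℝ) ≠ 0 := Nat.cast_ne_zero.mpr hk.ne'
    have h5 : ((i : ℝ) + 1) ≠ 0 := by positivity
    have h6 : ((i : ℝ) + k + 1) ≠ 0 := by positivity
    field_simp
    ring
  rw [h4] at h3
  rw [show Hh k / (k : ℝ) = 1 / (k : ℝ) * ∑ t ∈ range k, 1 / ((t : ℝ) + 1) by rw [Hh]; ring]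
  exact h3

noncomputable def zterm (a b : ℝ) (p : ℕ × ℕ) : ℝ :=
  a ^ (p.1 + 1) * b ^ (p.1 + p.2 + 2) / (((p.1 : ℝ) + 1) * ((p.1 : ℝ) + p.2 + 2) ^ 2)

noncomputable def dterm (a b : ℝ) (p : ℕ × ℕ) : ℝ :=
  a ^ (p.1 + 1) * b ^ (p.2 + 1) / (((p.1 : ℝ) + 1) * ((p.2 : ℝ) + 1) * ((p.1 : ℝ) + p.2 + 2))

noncomputable def gZ (p : ℕ × ℕ) : ℝ := 1 / (((p.1 : ℝ) + 1) * ((p.1 : ℝ) + p.2 + 2) ^ 2)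

noncomputable def gD (p : ℕ × ℕ) : ℝ :=
  1 / (((p.1 : ℝ) + 1) * ((p.2 : ℝ) + 1) * ((p.1 : ℝ) + p.2 + 2))

lemma abs_zterm {a b : ℝ} (ha : |a| = 1) (hb : |b| = 1) (p : ℕ × ℕ) :
    |zterm a b p| = gZ p := by
  rw [zterm, gZ, abs_div, abs_mul, abs_pow, abs_pow, ha, hb]
  have h1 : (0:ℝ) < (p.1 : ℝ) + 1 := by positivity
  have h2 : (0:ℝ) < ((p.1 : ℝ) + p.2 + 2) ^ 2 := by positivity
  rw [one_pow, one_pow, one_mul, abs_of_pos (by positivity)]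

lemma abs_dterm {a b : ℝ} (ha : |a| = 1) (hb : |b| = 1) (p : ℕ × ℕ) :
    |dterm a b p| = gD p := by
  rw [dterm, gD, abs_div, abs_mul, abs_pow, abs_pow, ha, hb]
  rw [one_pow, one_pow, one_mul, abs_of_pos (by positivity)]

lemma summable_one_div_sq : Summable (fun i : ℕ => 1 / ((i : ℝ) + 1) ^ 2) := by
  have h : Summable (fun n : ℕ => 1 / ((n : ℝ)) ^ 2) :=
    Real.summable_one_div_nat_pow.mpr one_lt_two
  have := (summable_nat_add_iff 1).mpr h
  refine this.congr fun i => ?_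
  push_cast
  ring

lemma summable_one_div_cube : Summable (fun i : ℕ => 1 / ((i : ℝ) + 1) ^ 3) := by
  have h : Summable (fun n : ℕ => 1 / ((n : ℝ)) ^ 3) :=
    Real.summable_one_div_nat_pow.mpr (by norm_num)
  have := (summable_nat_add_iff 1).mpr h
  refine this.congr fun i => ?_
  push_cast
  ring

lemma tele_pair (i : ℕ) :
    HasSum (fun m : ℕ => 1 / ((((m : ℝ) + i + 1)) * ((m : ℝ) + i + 2))) (1 / ((i : ℝ) + 1)) := by
  have h : (fun m : ℕ => 1 / (((m : ℝ) + i + 1) * ((m : ℝ) + i + 2)))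
      = fun m : ℕ => 1 / ((m : ℝ) + i + 1) - 1 / ((m : ℝ) + i + 2) := by
    funext m
    have h2 : (0:ℝ) < (m : ℝ) + i + 1 := by positivity
    have h3 : (0:ℝ) < (m : ℝ) + i + 2 := by positivity
    field_simp
    ring
  rw [h]; exact tele_single i

lemma gZ_nonneg (p : ℕ × ℕ) : 0 ≤ gZ p := by rw [gZ]; positivity
lemma gD_nonneg (p : ℕ × ℕ) : 0 ≤ gD p := by rw [gD]; positivity

lemma gZ_slice_hasSum_le (i : ℕ) :
    Summable (fun m : ℕ => gZ (i, m)) ∧ (∑' m : ℕ, gZ (i, m)) ≤ 1 / ((i : ℝ) + 1) ^ 2 := by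
  have hmaj : HasSum (fun m : ℕ => 1 / ((i : ℝ) + 1) * (1 / ((((m : ℝ) + i + 1)) * ((m : ℝ) + i + 2))))
      (1 / ((i : ℝ) + 1) ^ 2) := by
    have := (tele_pair i).mul_left (1 / ((i : ℝ) + 1))
    convert this using 1
    · rfl
    field_simp
  have hle : ∀ m : ℕ, gZ (i, m) ≤ 1 / ((i : ℝ) + 1) * (1 / ((((m : ℝ) + i + 1)) * ((m : ℝ) + i + 2))) := by
    intro m
    rw [gZ]
    have h1 : (0:ℝ) < (i : ℝ) + 1 := by positivity
    have h2 : (0:ℝ) < (m : ℝ) + i + 1 := by positivity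
    have h3 : (0:ℝ) < (i : ℝ) + m + 2 := by positivity
    rw [div_mul_div_comm, one_mul]
    apply one_div_le_one_div_of_le
    · positivity
    · have : ((m : ℝ) + i + 1) * ((m : ℝ) + i + 2) ≤ ((i : ℝ) + m + 2) ^ 2 := by nlinarith
      calc ((i : ℝ) + 1) * (((m : ℝ) + i + 1) * ((m : ℝ) + i + 2))
          ≤ ((i : ℝ) + 1) * ((i : ℝ) + m + 2) ^ 2 := by nlinarith
        _ = ((i : ℝ) + 1) * ((i : ℝ) + (m : ℝ) + 2) ^ 2 := by ring
  have hsum : Summable (fun m : ℕ => gZ (i, m)) :=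
    Summable.of_nonneg_of_le (fun m => gZ_nonneg _) hle hmaj.summable
  exact ⟨hsum, (Summable.tsum_le_tsum hle hsum hmaj.summable).trans_eq hmaj.tsum_eq⟩

lemma summable_gZ : Summable gZ := by
  refine (summable_prod_of_nonneg (f := gZ) (fun p => gZ_nonneg p)).mpr
    ⟨fun i => (gZ_slice_hasSum_le i).1, ?_⟩
  refine Summable.of_nonneg_of_le (fun i => tsum_nonneg fun m => gZ_nonneg _)
    (fun i => (gZ_slice_hasSum_le i).2) summable_one_div_sq

lemma summable_zterm {a b : ℝ} (ha : |a| = 1) (hb : |b| = 1) : Summable (zterm a b) :=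
  Summable.of_abs (summable_gZ.congr fun p => (abs_zterm ha hb p).symm)

lemma tsum_antidiagonal_eq {F : ℕ × ℕ → ℝ} (h : Summable F) :
    ∑' p : ℕ × ℕ, F p = ∑' s : ℕ, ∑ q ∈ Finset.HasAntidiagonal.antidiagonal s, F q := by
  rw [← Finset.HasAntidiagonal.sigmaAntidiagonalEquivProd.tsum_eq F]
  have h2 : Summable (fun c : (Σ n : ℕ, {x // x ∈ Finset.HasAntidiagonal.antidiagonal n}) =>
      F (Finset.HasAntidiagonal.sigmaAntidiagonalEquivProd c)) :=
    Finset.HasAntidiagonal.sigmaAntidiagonalEquivProd.summable_iff.mpr h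
  rw [Summable.tsum_sigma h2]
  congr 1
  funext s
  exact Finset.tsum_subtype (Finset.HasAntidiagonal.antidiagonal s) F

lemma summable_antidiagonal_of_nonneg {F : ℕ × ℕ → ℝ} (hnn : ∀ p, 0 ≤ F p) (h : Summable F) :
    Summable (fun s : ℕ => ∑ q ∈ Finset.HasAntidiagonal.antidiagonal s, F q) := by
  have h2 : Summable (fun c : (Σ n : ℕ, {x // x ∈ Finset.HasAntidiagonal.antidiagonal n}) =>
      F (Finset.HasAntidiagonal.sigmaAntidiagonalEquivProd c)) :=
    Finset.HasAntidiagonal.sigmaAntidiagonalEquivProd.summable_iff.mpr h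
  have h3 := (summable_sigma_of_nonneg (fun x => hnn _)).mp h2
  refine h3.2.congr fun s => ?_
  exact Finset.tsum_subtype (Finset.HasAntidiagonal.antidiagonal s) F

lemma summable_of_antidiagonal_of_nonneg {F : ℕ × ℕ → ℝ} (hnn : ∀ p, 0 ≤ F p)
    (h : Summable (fun s : ℕ => ∑ q ∈ Finset.HasAntidiagonal.antidiagonal s, F q)) : Summable F := by
  rw [← Finset.HasAntidiagonal.sigmaAntidiagonalEquivProd.summable_iff]
  have : Summable (fun c : (Σ n : ℕ, {x // x ∈ Finset.HasAntidiagonal.antidiagonal n}) =>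
      F (Finset.HasAntidiagonal.sigmaAntidiagonalEquivProd c)) := by
    refine (summable_sigma_of_nonneg (fun x => hnn _)).mpr ⟨fun n => Summable.of_finite, ?_⟩
    refine h.congr fun s => ?_
    exact (Finset.tsum_subtype (Finset.HasAntidiagonal.antidiagonal s) F).symm
  exact this

lemma gZ_fiber (s : ℕ) :
    ∑ q ∈ Finset.HasAntidiagonal.antidiagonal s, gZ q = Hh (s + 1) / ((s : ℝ) + 2) ^ 2 := by
  rw [Finset.Nat.sum_antidiagonal_eq_sum_range_succ_mk]
  have h : ∀ i ∈ Finset.range (s + 1), gZ (i, s - i) = 1 / ((s:ℝ) + 2)^2 * (1 / ((i:ℝ) + 1)) := by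
    intro i hi
    have hi' : i ≤ s := Nat.lt_succ_iff.mp (Finset.mem_range.mp hi)
    rw [gZ]
    have hcast : ((i : ℝ) + ((s - i : ℕ) : ℝ)) = (s : ℝ) := by
      rw [Nat.cast_sub hi']; ring
    simp only [hcast]
    rw [one_div_mul_one_div, mul_comm ((i:ℝ) + 1)]
  rw [Finset.sum_congr rfl h, ← Finset.mul_sum]
  rw [Hh]
  ring

lemma Hh_succ (k : ℕ) : Hh (k + 1) = Hh k + 1 / ((k : ℝ) + 1) := Finset.sum_range_succ _ k

lemma summable_Hh_shift : Summable (fun s : ℕ => Hh (s + 1) / ((s : ℝ) + 2) ^ 2) := by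
  have := summable_antidiagonal_of_nonneg gZ_nonneg summable_gZ
  exact this.congr fun s => gZ_fiber s

lemma summable_Hh : Summable (fun i : ℕ => Hh (i + 1) / ((i : ℝ) + 1) ^ 2) := by
  apply (summable_nat_add_iff 1).mp
  have hc : Summable (fun s : ℕ => 1 / ((s : ℝ) + 2) ^ 3) := by
    have := (summable_nat_add_iff 1).mpr summable_one_div_cube
    refine this.congr fun s => ?_
    push_cast
    ring
  refine (summable_Hh_shift.add hc).congr fun s => ?_
  rw [Hh_succ (s + 1)]
  push_cast
  field_simp
  ring

lemma gD_slice (i : ℕ) :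
    HasSum (fun m : ℕ => gD (i, m)) (Hh (i + 1) / ((i : ℝ) + 1) ^ 2) := by
  have h := (tele_k (i + 1) (Nat.succ_pos i)).mul_left (1 / ((i : ℝ) + 1))
  have he : (fun m : ℕ => 1 / ((i : ℝ) + 1) * (1 / (((m : ℝ) + 1) * ((m : ℝ) + (i + 1 : ℕ) + 1))))
      = fun m : ℕ => gD (i, m) := by
    funext m
    rw [gD]
    push_cast
    rw [one_div_mul_one_div]
    ring_nf
  rw [he] at h
  convert h using 1
  · rfl
  push_cast
  rw [div_mul_div_comm, one_mul, ← sq]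

lemma summable_gD : Summable gD := by
  refine (summable_prod_of_nonneg (f := gD) (fun p => gD_nonneg p)).mpr
    ⟨fun i => (gD_slice i).summable, ?_⟩
  refine summable_Hh.congr fun i => ?_
  exact ((gD_slice i).tsum_eq).symm

lemma summable_dterm {a b : ℝ} (ha : |a| = 1) (hb : |b| = 1) : Summable (dterm a b) :=
  Summable.of_abs ((summable_gD.congr fun p => (abs_dterm ha hb p).symm))

lemma dterm_one_inner (b : ℝ) (m : ℕ) :
    HasSum (fun i : ℕ => dterm 1 b (i, m))
      (b ^ (m + 1) * Hh (m + 1) / ((m : ℝ) + 1) ^ 2) := by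
  have h := (tele_k (m + 1) (Nat.succ_pos m)).mul_left (b ^ (m + 1) / ((m : ℝ) + 1))
  have he : (fun i : ℕ => b ^ (m + 1) / ((m : ℝ) + 1) *
      (1 / (((i : ℝ) + 1) * ((i : ℝ) + (m + 1 : ℕ) + 1))))
      = fun i : ℕ => dterm 1 b (i, m) := by
    funext i
    rw [dterm]
    simp only [one_pow, one_mul]
    push_cast
    rw [div_mul_div_comm, mul_one]
    congr 1
    ring
  rw [he] at h
  convert h using 1
  · rfl
  push_cast
  rw [div_mul_div_comm, ← sq]

lemma tsum_dterm_one (b : ℝ) (hb : |b| = 1) :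
    ∑' p : ℕ × ℕ, dterm 1 b p = ∑' m : ℕ, b ^ (m + 1) * Hh (m + 1) / ((m : ℝ) + 1) ^ 2 := by
  have hsum : Summable (dterm 1 b) := summable_dterm (by norm_num) hb
  have hswap : ∑' p : ℕ × ℕ, dterm 1 b p
      = ∑' q : ℕ × ℕ, dterm 1 b (q.2, q.1) := by
    exact ((Equiv.prodComm ℕ ℕ).tsum_eq (fun p => dterm 1 b p)).symm
  rw [hswap]
  have hsum2 : Summable (fun q : ℕ × ℕ => dterm 1 b (q.2, q.1)) :=
    (Equiv.prodComm ℕ ℕ).summable_iff.mpr hsum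
  rw [Summable.tsum_prod' hsum2 (fun m => (dterm_one_inner b m).summable)]
  congr 1
  funext m
  exact (dterm_one_inner b m).tsum_eq

lemma dterm_split {a b : ℝ} (ha : a ^ 2 = 1) (hb : b ^ 2 = 1) (p : ℕ × ℕ) :
    dterm a b p = zterm (a * b) b p + zterm (b * a) a (p.2, p.1) := by
  obtain ⟨i, m⟩ := p
  simp only [dterm, zterm]
  have e1 : (a * b) ^ (i + 1) * b ^ (i + m + 2) = a ^ (i + 1) * b ^ (m + 1) := by
    rw [mul_pow, mul_assoc, ← pow_add]
    rw [show (i + 1) + (i + m + 2) = 2 * (i + 1) + (m + 1) by ring]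
    rw [pow_add b (2 * (i + 1)) (m + 1), pow_mul, hb, one_pow, one_mul]
  have e2 : (b * a) ^ (m + 1) * a ^ (m + i + 2) = a ^ (i + 1) * b ^ (m + 1) := by
    rw [mul_pow, mul_assoc, ← pow_add]
    rw [show (m + 1) + (m + i + 2) = 2 * (m + 1) + (i + 1) by ring]
    rw [pow_add a (2 * (m + 1)) (i + 1), pow_mul, ha, one_pow, one_mul]
    ring
  rw [e1, e2]
  have h1 : ((i : ℝ) + 1) ≠ 0 := by positivity
  have h2 : ((m : ℝ) + 1) ≠ 0 := by positivity
  have h3 : ((i : ℝ) + m + 2) ≠ 0 := by positivity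
  have h4 : ((m : ℝ) + i + 2) ≠ 0 := by positivity
  rw [div_add_div _ _ (by positivity) (by positivity)]
  rw [div_eq_div_iff (by positivity) (by positivity)]
  ring

lemma zterm_fiber (b : ℝ) (s : ℕ) :
    ∑ q ∈ Finset.HasAntidiagonal.antidiagonal s, zterm 1 b q = b ^ (s + 2) * Hh (s + 1) / ((s : ℝ) + 2) ^ 2 := by
  rw [Finset.Nat.sum_antidiagonal_eq_sum_range_succ_mk]
  have h : ∀ i ∈ Finset.range (s + 1),
      zterm 1 b (i, s - i) = b ^ (s + 2) / ((s : ℝ) + 2) ^ 2 * (1 / ((i : ℝ) + 1)) := by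
    intro i hi
    have hi' : i ≤ s := Nat.lt_succ_iff.mp (Finset.mem_range.mp hi)
    rw [zterm]
    simp only
    rw [show i + (s - i) + 2 = s + 2 from by omega, one_pow, one_mul]
    have hcast : ((i : ℝ) + ((s - i : ℕ) : ℝ)) = (s : ℝ) := by
      rw [Nat.cast_sub hi']; ring
    rw [hcast]
    rw [div_mul_div_comm, mul_one, mul_comm ((i : ℝ) + 1)]
  rw [Finset.sum_congr rfl h, ← Finset.mul_sum, Hh]
  ring

lemma tsum_zterm_one (b : ℝ) (hb : |b| = 1) :
    ∑' p : ℕ × ℕ, zterm 1 b p = ∑' s : ℕ, b ^ (s + 2) * Hh (s + 1) / ((s : ℝ) + 2) ^ 2 := by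
  rw [tsum_antidiagonal_eq (summable_zterm (by norm_num) hb)]
  congr 1
  funext s
  exact zterm_fiber b s

lemma Hh_nonneg (k : ℕ) : 0 ≤ Hh k := by
  apply Finset.sum_nonneg
  intro j _
  positivity

lemma abs_pow_one {b : ℝ} (hb : |b| = 1) (n : ℕ) : |b ^ n| = 1 := by
  rw [abs_pow, hb, one_pow]

lemma summable_A {b : ℝ} (hb : |b| = 1) :
    Summable (fun s : ℕ => b ^ (s + 2) * Hh (s + 1) / ((s : ℝ) + 2) ^ 2) := by
  apply Summable.of_abs
  refine summable_Hh_shift.congr fun s => ?_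
  rw [abs_div, abs_mul, abs_pow_one hb, one_mul, abs_of_nonneg (Hh_nonneg _),
    abs_of_nonneg (by positivity)]

lemma summable_cube_shift : Summable (fun s : ℕ => 1 / ((s : ℝ) + 2) ^ 3) := by
  have := (summable_nat_add_iff 1).mpr summable_one_div_cube
  refine this.congr fun s => ?_
  push_cast
  ring

lemma summable_B {b : ℝ} (hb : |b| = 1) :
    Summable (fun s : ℕ => b ^ (s + 2) / ((s : ℝ) + 2) ^ 3) := by
  apply Summable.of_abs
  refine summable_cube_shift.congr fun s => ?_
  rw [abs_div, abs_pow_one hb, abs_of_nonneg (by positivity)]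

lemma summable_f {b : ℝ} (hb : |b| = 1) :
    Summable (fun m : ℕ => b ^ (m + 1) * Hh (m + 1) / ((m : ℝ) + 1) ^ 2) := by
  apply Summable.of_abs
  refine summable_Hh.congr fun m => ?_
  rw [abs_div, abs_mul, abs_pow_one hb, one_mul, abs_of_nonneg (Hh_nonneg _),
    abs_of_nonneg (by positivity)]

lemma summable_g {b : ℝ} (hb : |b| = 1) :
    Summable (fun n : ℕ => b ^ (n + 1) / ((n : ℝ) + 1) ^ 3) := by
  apply Summable.of_abs
  refine summable_one_div_cube.congr fun n => ?_
  rw [abs_div, abs_pow_one hb, abs_of_nonneg (by positivity)]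

lemma combine (b : ℝ) (hb : |b| = 1) :
    ∑' m : ℕ, b ^ (m + 1) * Hh (m + 1) / ((m : ℝ) + 1) ^ 2
      = (∑' s : ℕ, b ^ (s + 2) * Hh (s + 1) / ((s : ℝ) + 2) ^ 2)
        + ∑' n : ℕ, b ^ (n + 1) / ((n : ℝ) + 1) ^ 3 := by
  set f : ℕ → ℝ := fun m => b ^ (m + 1) * Hh (m + 1) / ((m : ℝ) + 1) ^ 2 with hfdef
  set g : ℕ → ℝ := fun n => b ^ (n + 1) / ((n : ℝ) + 1) ^ 3 with hgdef
  set A : ℕ → ℝ := fun s => b ^ (s + 2) * Hh (s + 1) / ((s : ℝ) + 2) ^ 2 with hAdef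
  set B : ℕ → ℝ := fun s => b ^ (s + 2) / ((s : ℝ) + 2) ^ 3 with hBdef
  have hA := summable_A hb
  have hB := summable_B hb
  have hsplit : (fun s : ℕ => A s + B s) = fun s : ℕ => f (s + 1) := by
    funext m
    simp only [hfdef, hAdef, hBdef]
    rw [Hh_succ (m + 1)]
    push_cast
    have h2 : ((m : ℝ) + 2) ≠ 0 := by positivity
    field_simp
    ring
  have hfs : HasSum f (f 0 + ((∑' s, A s) + ∑' s, B s)) := by
    have hv : HasSum (fun s : ℕ => f (s + 1)) ((∑' s, A s) + ∑' s, B s) := by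
      rw [← hsplit]; exact hA.hasSum.add hB.hasSum
    exact hv.zero_add
  have hgB : (fun n : ℕ => B n) = fun n : ℕ => g (n + 1) := by
    funext n
    simp only [hgdef, hBdef]
    push_cast
    ring_nf
  have hgs : HasSum g (g 0 + ∑' s, B s) := by
    have hv : HasSum (fun n : ℕ => g (n + 1)) (∑' s, B s) := by
      rw [← hgB]; exact hB.hasSum
    exact hv.zero_add
  have hf0 : f 0 = b := by simp [hfdef, Hh]
  have hg0 : g 0 = b := by simp [hgdef]
  rw [hfs.tsum_eq, hgs.tsum_eq, hf0, hg0]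
  ring

lemma L_neg : ∑' n : ℕ, (-1 : ℝ) ^ (n + 1) / ((n : ℝ) + 1) ^ 3
    = -(3 / 4) * ∑' n : ℕ, 1 / ((n : ℝ) + 1) ^ 3 := by
  set φ : ℕ → ℝ := fun n => 1 / ((n : ℝ) + 1) ^ 3 + (-1 : ℝ) ^ (n + 1) / ((n : ℝ) + 1) ^ 3
    with hφ
  have hgsum : Summable (fun n : ℕ => (-1 : ℝ) ^ (n + 1) / ((n : ℝ) + 1) ^ 3) :=
    summable_g (by norm_num)
  have htsum : ∑' n, φ n
      = (∑' n : ℕ, 1 / ((n : ℝ) + 1) ^ 3) + ∑' n : ℕ, (-1 : ℝ) ^ (n + 1) / ((n : ℝ) + 1) ^ 3 :=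
    Summable.tsum_add summable_one_div_cube hgsum
  have heven : ∀ k : ℕ, φ (2 * k) = 0 := by
    intro k
    simp only [hφ]
    have : ((-1 : ℝ)) ^ (2 * k + 1) = -1 := Odd.neg_one_pow ⟨k, by ring⟩
    rw [this]
    ring
  have hodd : ∀ k : ℕ, φ (2 * k + 1) = 1 / 4 * (1 / ((k : ℝ) + 1) ^ 3) := by
    intro k
    simp only [hφ]
    have : ((-1 : ℝ)) ^ (2 * k + 1 + 1) = 1 := Even.neg_one_pow ⟨k + 1, by ring⟩
    rw [this]
    push_cast
    have h1 : ((2 * (k : ℝ) + 1) + 1) = 2 * ((k : ℝ) + 1) := by ring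
    rw [h1]
    have h2 : ((k : ℝ) + 1) ≠ 0 := by positivity
    field_simp
    ring
  have he : Summable (fun k : ℕ => φ (2 * k)) := by
    refine summable_zero.congr fun k => ?_
    rw [heven k]
  have ho : Summable (fun k : ℕ => φ (2 * k + 1)) := by
    refine ((summable_one_div_cube.mul_left (1 / 4))).congr fun k => ?_
    rw [hodd k]
  have hkey := tsum_even_add_odd he ho
  rw [funext heven, funext hodd] at hkey
  rw [tsum_zero, tsum_mul_left] at hkey
  rw [htsum] at hkey
  linarith [hkey]

noncomputable def fourF (p : ℕ × ℕ) : ℝ :=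
  (1 + (-1 : ℝ) ^ (p.1 + 1)) * (1 + (-1 : ℝ) ^ (p.1 + p.2 + 2))
    / (((p.1 : ℝ) + 1) * ((p.1 : ℝ) + p.2 + 2) ^ 2)

lemma four_split (p : ℕ × ℕ) :
    fourF p = zterm 1 1 p + zterm 1 (-1) p + zterm (-1) 1 p + zterm (-1) (-1) p := by
  obtain ⟨i, m⟩ := p
  simp only [fourF, zterm, one_pow, one_mul]
  rw [← add_div, ← add_div, ← add_div]
  congr 1
  ring

lemma four_vanish (p : ℕ × ℕ) (h : ¬(Odd p.1 ∧ Odd p.2)) : fourF p = 0 := by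
  obtain ⟨i, m⟩ := p
  simp only [fourF]
  by_cases hi : Odd i
  · have hm : ¬ Odd m := by tauto
    have hodd : Odd (i + m + 2) := by
      rcases hi with ⟨a, ha⟩
      rw [Nat.not_odd_iff_even] at hm
      rcases hm with ⟨b, hb⟩
      exact ⟨a + b + 1, by omega⟩
    rw [Odd.neg_one_pow hodd]
    ring_nf
  · have hodd : Odd (i + 1) := by
      rw [Nat.not_odd_iff_even] at hi
      rcases hi with ⟨a, ha⟩
      exact ⟨a, by omega⟩
    rw [Odd.neg_one_pow hodd]
    ring_nf

def phiMap (q : ℕ × ℕ) : ℕ × ℕ := (2 * q.1 + 1, 2 * q.2 + 1)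

lemma phiMap_inj : Function.Injective phiMap := by
  intro a b h
  simp only [phiMap, Prod.mk.injEq] at h
  exact Prod.ext (by omega) (by omega)

lemma four_support : Function.support fourF ⊆ Set.range phiMap := by
  intro p hp
  by_cases h : Odd p.1 ∧ Odd p.2
  · obtain ⟨⟨a, ha⟩, ⟨b, hb⟩⟩ := h
    exact ⟨(a, b), by simp only [phiMap]; exact Prod.ext (by omega) (by omega)⟩
  · exact absurd (four_vanish p h) hp

lemma four_phi (q : ℕ × ℕ) : fourF (phiMap q) = 1 / 2 * zterm 1 1 q := by
  obtain ⟨u, v⟩ := q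
  simp only [fourF, phiMap, zterm, one_pow, one_mul]
  have h1 : ((-1 : ℝ)) ^ (2 * u + 1 + 1) = 1 := Even.neg_one_pow ⟨u + 1, by ring⟩
  have h2 : ((-1 : ℝ)) ^ (2 * u + 1 + (2 * v + 1) + 2) = 1 :=
    Even.neg_one_pow ⟨u + v + 2, by ring⟩
  rw [h1, h2]
  push_cast
  have d1 : (2 * (u : ℝ) + 1 + 1) ≠ 0 := by positivity
  have d2 : (2 * (u : ℝ) + 1 + (2 * (v : ℝ) + 1) + 2) ≠ 0 := by positivity
  have d3 : ((u : ℝ) + 1) ≠ 0 := by positivity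
  have d4 : ((u : ℝ) + (v : ℝ) + 2) ≠ 0 := by positivity
  field_simp
  ring

lemma parity_relation :
    (∑' p : ℕ × ℕ, zterm 1 1 p) + (∑' p : ℕ × ℕ, zterm 1 (-1) p)
      + (∑' p : ℕ × ℕ, zterm (-1) 1 p) + (∑' p : ℕ × ℕ, zterm (-1) (-1) p)
      = 1 / 2 * ∑' p : ℕ × ℕ, zterm 1 1 p := by
  have s11 := summable_zterm (a := 1) (b := 1) (by norm_num) (by norm_num)
  have s1m := summable_zterm (a := 1) (b := -1) (by norm_num) (by norm_num)
  have sm1 := summable_zterm (a := -1) (b := 1) (by norm_num) (by norm_num)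
  have smm := summable_zterm (a := -1) (b := -1) (by norm_num) (by norm_num)
  have h1 : ∑' p : ℕ × ℕ, fourF p
      = (∑' p : ℕ × ℕ, zterm 1 1 p) + (∑' p : ℕ × ℕ, zterm 1 (-1) p)
        + (∑' p : ℕ × ℕ, zterm (-1) 1 p) + (∑' p : ℕ × ℕ, zterm (-1) (-1) p) := by
    rw [funext four_split]
    rw [Summable.tsum_add ((s11.add s1m).add sm1) smm, Summable.tsum_add (s11.add s1m) sm1, Summable.tsum_add s11 s1m]
  have h2 : ∑' p : ℕ × ℕ, fourF p = 1 / 2 * ∑' p : ℕ × ℕ, zterm 1 1 p := by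
    rw [← phiMap_inj.tsum_eq four_support]
    rw [funext four_phi]
    exact tsum_mul_left
  rw [← h1, h2]

lemma tsum_dterm_split {a b : ℝ} (ha : |a| = 1) (hb : |b| = 1) :
    ∑' p : ℕ × ℕ, dterm a b p
      = (∑' p : ℕ × ℕ, zterm (a * b) b p) + ∑' p : ℕ × ℕ, zterm (b * a) a p := by
  have ha2 : a ^ 2 = 1 := by
    have := sq_abs a; rw [ha] at this; linarith [this]
  have hb2 : b ^ 2 = 1 := by
    have := sq_abs b; rw [hb] at this; linarith [this]
  have hab : |a * b| = 1 := by rw [abs_mul, ha, hb, one_mul]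
  have hba : |b * a| = 1 := by rw [abs_mul, ha, hb, one_mul]
  have s1 : Summable (zterm (a * b) b) := summable_zterm hab hb
  have s2 : Summable (fun p : ℕ × ℕ => zterm (b * a) a (p.2, p.1)) :=
    (Equiv.prodComm ℕ ℕ).summable_iff.mpr (summable_zterm hba ha)
  rw [funext (dterm_split ha2 hb2), Summable.tsum_add s1 s2]
  congr 1
  exact (Equiv.prodComm ℕ ℕ).tsum_eq (zterm (b * a) a)

lemma L_one : ∑' n : ℕ, (1 : ℝ) ^ (n + 1) / ((n : ℝ) + 1) ^ 3
    = ∑' n : ℕ, 1 / ((n : ℝ) + 1) ^ 3 := by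
  congr 1; funext n; rw [one_pow]

lemma tsum_dterm_val (b : ℝ) (hb : |b| = 1) :
    ∑' p : ℕ × ℕ, dterm 1 b p
      = (∑' p : ℕ × ℕ, zterm 1 b p) + ∑' n : ℕ, b ^ (n + 1) / ((n : ℝ) + 1) ^ 3 := by
  rw [tsum_dterm_one b hb, combine b hb, tsum_zterm_one b hb]

lemma Z11_eq : ∑' p : ℕ × ℕ, zterm 1 1 p = ∑' n : ℕ, 1 / ((n : ℝ) + 1) ^ 3 := by
  have h1 := tsum_dterm_split (a := 1) (b := 1) (by norm_num) (by norm_num)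
  have h2 := tsum_dterm_val 1 (by norm_num)
  rw [one_mul] at h1
  rw [h1, L_one] at h2
  linarith [h2]

lemma Z1m_eq : ∑' p : ℕ × ℕ, zterm 1 (-1) p = (∑' n : ℕ, 1 / ((n : ℝ) + 1) ^ 3) / 8 := by
  have h1 := tsum_dterm_split (a := 1) (b := -1) (by norm_num) (by norm_num)
  have h2 := tsum_dterm_val (-1) (by norm_num)
  rw [one_mul, mul_one] at h1
  rw [h1, L_neg] at h2
  have h3 := parity_relation
  rw [Z11_eq] at h3
  linarith [h2, h3]

def eSub : ℕ × ℕ ≃ {p : ℕ × ℕ // 0 < p.1 ∧ p.1 < p.2} where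
  toFun q := ⟨(q.1 + 1, q.1 + q.2 + 2), by constructor <;> omega⟩
  invFun p := (p.1.1 - 1, p.1.2 - p.1.1 - 1)
  left_inv q := by
    obtain ⟨i, m⟩ := q
    simp only [Prod.mk.injEq]
    omega
  right_inv p := by
    obtain ⟨⟨j, k⟩, h⟩ := p
    apply Subtype.ext
    simp only [Prod.mk.injEq]
    obtain ⟨h1, h2⟩ := h
    constructor <;> omega

theorem alternating_mzv_one_two_bar :
    (Summable fun p : {p : ℕ × ℕ // 0 < p.1 ∧ p.1 < p.2} =>
      |(-1 : ℝ) ^ p.1.2 / ((p.1.1 : ℝ) * (p.1.2 : ℝ) ^ 2)|) ∧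
    (∑' p : {p : ℕ × ℕ // 0 < p.1 ∧ p.1 < p.2},
        (-1 : ℝ) ^ p.1.2 / ((p.1.1 : ℝ) * (p.1.2 : ℝ) ^ 2))
      = (∑' n : ℕ, 1 / ((n : ℝ) + 1) ^ 3) / 8 := by
  constructor
  · rw [← eSub.summable_iff]
    refine summable_gZ.congr fun q => ?_
    obtain ⟨i, m⟩ := q
    simp only [Function.comp, eSub, Equiv.coe_fn_mk, gZ]
    rw [abs_div, abs_pow, abs_neg, abs_one, one_pow]
    rw [abs_of_pos (by positivity)]
    push_cast
    ring_nf
  · rw [← eSub.tsum_eq]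
    rw [show (fun q : ℕ × ℕ => (-1 : ℝ) ^ ((eSub q).val.2) /
        (((eSub q).val.1 : ℝ) * ((eSub q).val.2 : ℝ) ^ 2)) = zterm 1 (-1) from ?_]
    · exact Z1m_eq
    · funext q
      obtain ⟨i, m⟩ := q
      simp only [eSub, Equiv.coe_fn_mk, zterm, one_pow, one_mul]
      push_cast
      ring_nf
end

section
/- The limit as N → ∞ of the truncated sums ∑_{0<k₁<k₂<k₃≤N} (−1)^{k₁+k₂+k₃}/(k₁·k₂·k₃) exists and equals −(1/6)·log³2 + (π²/12)·log 2 − (1/4)·ζ(3). (This is the alternating multiple zeta value ζ(1̄,1̄,1̄).) -/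
set_option maxHeartbeats 1000000

open Finset Filter Real Topology

private lemma amzv_hasSum_ext {f g : ℕ → ℝ} {a : ℝ} (h : ∀ n, f n = g n) (hf : HasSum f a) :
    HasSum g a := (funext h : f = g) ▸ hf

private lemma amzv_e2_formula (x : ℕ → ℝ) (N : ℕ) :
    ∑ b ∈ Icc 1 N, (∑ a ∈ Ico 1 b, x a) * x b
      = ((∑ k ∈ Icc 1 N, x k) ^ 2 - ∑ k ∈ Icc 1 N, x k ^ 2) / 2 := by
  induction N with
  | zero => simp
  | succ n ih =>
    have h1 : (1 : ℕ) ≤ n + 1 := n.succ_pos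
    rw [Finset.sum_Icc_succ_top h1, Finset.Ico_add_one_right_eq_Icc, ih,
      Finset.sum_Icc_succ_top h1, Finset.sum_Icc_succ_top h1]
    ring

private lemma amzv_e3_formula (x : ℕ → ℝ) (N : ℕ) :
    ∑ c ∈ Icc 1 N, ∑ b ∈ Ico 1 c, ∑ a ∈ Ico 1 b, x a * x b * x c
      = ((∑ k ∈ Icc 1 N, x k) ^ 3 - 3 * (∑ k ∈ Icc 1 N, x k) * (∑ k ∈ Icc 1 N, x k ^ 2)
          + 2 * ∑ k ∈ Icc 1 N, x k ^ 3) / 6 := by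
  induction N with
  | zero => simp
  | succ n ih =>
    have h1 : (1 : ℕ) ≤ n + 1 := n.succ_pos
    have hterm : ∑ b ∈ Ico 1 (n + 1), ∑ a ∈ Ico 1 b, x a * x b * x (n + 1)
        = ((∑ k ∈ Icc 1 n, x k) ^ 2 - ∑ k ∈ Icc 1 n, x k ^ 2) / 2 * x (n + 1) := by
      rw [Finset.Ico_add_one_right_eq_Icc, ← amzv_e2_formula x n, Finset.sum_mul]
      refine Finset.sum_congr rfl fun b _ => ?_
      rw [mul_assoc, Finset.sum_mul]
      exact Finset.sum_congr rfl fun a _ => mul_assoc _ _ _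
    rw [Finset.sum_Icc_succ_top h1, hterm, ih,
      Finset.sum_Icc_succ_top h1, Finset.sum_Icc_succ_top h1, Finset.sum_Icc_succ_top h1]
    ring

private lemma amzv_sum_Icc_of_hasSum {g : ℕ → ℝ} {L : ℝ} (hg : HasSum g L) (h0 : g 0 = 0) :
    Tendsto (fun N : ℕ => ∑ k ∈ Icc 1 N, g k) atTop (𝓝 L) := by
  have heq : ∀ N : ℕ, ∑ k ∈ Icc 1 N, g k = ∑ i ∈ range (N + 1), g i := by
    intro N
    rw [Finset.range_eq_Ico, Finset.sum_eq_sum_Ico_succ_bot (Nat.succ_pos N), h0, zero_add,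
      Nat.succ_eq_add_one, zero_add, Finset.Ico_add_one_right_eq_Icc]
  simp only [heq]
  exact hg.tendsto_sum_nat.comp (tendsto_add_atTop_nat 1)

private lemma amzv_two_mul_tendsto : Tendsto (fun n : ℕ => 2 * n) atTop atTop :=
  StrictMono.tendsto_atTop (fun a b h => by omega)

private lemma amzv_alt_partial_harmonic (n : ℕ) :
    ∑ i ∈ range (2 * n), (-1 : ℝ) ^ i * (1 / ((i : ℝ) + 1))
      = (harmonic (2 * n) : ℝ) - (harmonic n : ℝ) := by
  induction n with
  | zero => simp
  | succ m ih =>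
    have h2 : 2 * (m + 1) = 2 * m + 1 + 1 := by ring
    rw [h2, Finset.sum_range_succ, Finset.sum_range_succ, ih]
    have he : (-1 : ℝ) ^ (2 * m) = 1 := Even.neg_one_pow ⟨m, by ring⟩
    have ho : (-1 : ℝ) ^ (2 * m + 1) = -1 := Odd.neg_one_pow ⟨m, rfl⟩
    rw [he, ho, harmonic_succ, harmonic_succ (2 * m), harmonic_succ m]
    push_cast
    have hm1 : ((m : ℝ) + 1) ≠ 0 := by positivity
    have hm2 : (2 * (m : ℝ) + 1) ≠ 0 := by positivity
    have hm3 : (2 * (m : ℝ) + 1 + 1) ≠ 0 := by positivity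
    field_simp
    ring

private lemma amzv_harmonic_diff_tendsto :
    Tendsto (fun n : ℕ => (harmonic (2 * n) : ℝ) - (harmonic n : ℝ)) atTop (𝓝 (Real.log 2)) := by
  have h1 := tendsto_harmonic_sub_log.comp amzv_two_mul_tendsto
  have h2 := tendsto_harmonic_sub_log
  have h3 := (h1.sub h2).add_const (Real.log 2)
  rw [sub_self, zero_add] at h3
  apply h3.congr'
  filter_upwards [eventually_ge_atTop 1] with n hn
  have hn0 : ((n : ℝ)) ≠ 0 := by
    have : (1 : ℝ) ≤ (n : ℝ) := by exact_mod_cast hn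
    linarith
  simp only [Function.comp]
  push_cast
  rw [Real.log_mul two_ne_zero hn0]
  ring

private lemma amzv_alt_harmonic_tendsto :
    Tendsto (fun N : ℕ => ∑ k ∈ Icc 1 N, (-1 : ℝ) ^ k / (k : ℝ)) atTop
      (𝓝 (-Real.log 2)) := by
  have hanti : Antitone (fun i : ℕ => 1 / ((i : ℝ) + 1)) := by
    intro a b hab
    have hab' : (a : ℝ) + 1 ≤ (b : ℝ) + 1 := by
      have : (a : ℝ) ≤ (b : ℝ) := by exact_mod_cast hab
      linarith
    exact one_div_le_one_div_of_le (by positivity) hab'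
  have hz : Tendsto (fun i : ℕ => 1 / ((i : ℝ) + 1)) atTop (𝓝 0) :=
    tendsto_one_div_add_atTop_nhds_zero_nat
  obtain ⟨l, hl⟩ := hanti.tendsto_alternating_series_of_tendsto_zero hz
  have hleven : Tendsto (fun n : ℕ => ∑ i ∈ range (2 * n), (-1 : ℝ) ^ i * (1 / ((i : ℝ) + 1)))
      atTop (𝓝 l) := hl.comp amzv_two_mul_tendsto
  have hleq : l = Real.log 2 := by
    refine tendsto_nhds_unique ?_ amzv_harmonic_diff_tendsto
    exact hleven.congr amzv_alt_partial_harmonic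
  subst hleq
  have key : ∀ N : ℕ, ∑ k ∈ Icc 1 N, (-1 : ℝ) ^ k / (k : ℝ)
      = -∑ i ∈ range N, (-1 : ℝ) ^ i * (1 / ((i : ℝ) + 1)) := by
    intro N
    rw [← Finset.Ico_add_one_right_eq_Icc, Finset.sum_Ico_eq_sum_range, ← Finset.sum_neg_distrib]
    apply Finset.sum_congr (by simp)
    intro i _
    rw [pow_add]
    push_cast
    ring
  exact Tendsto.congr (fun N => (key N).symm) hl.neg

theorem alternating_mzv_one_bar_one_bar_one_bar :
    Filter.Tendsto
      (fun N : ℕ => ∑ c ∈ Finset.Icc 1 N, ∑ b ∈ Finset.Ico 1 c, ∑ a ∈ Finset.Ico 1 b,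
        (-1 : ℝ) ^ (a + b + c) / ((a : ℝ) * (b : ℝ) * (c : ℝ)))
      Filter.atTop
      (nhds (-(Real.log 2) ^ 3 / 6 + Real.pi ^ 2 / 12 * Real.log 2
        - (∑' n : ℕ, 1 / ((n : ℝ) + 1) ^ 3) / 4)) := by
  set Z : ℝ := ∑' n : ℕ, 1 / ((n : ℝ) + 1) ^ 3 with hZdef
  set x : ℕ → ℝ := fun k => (-1 : ℝ) ^ k / (k : ℝ) with hxdef
  -- the summable zeta(3) series
  have hsumm : Summable (fun n : ℕ => 1 / ((n : ℝ) + 1) ^ 3) := by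
    have h1 : Summable (fun n : ℕ => 1 / (n : ℝ) ^ 3) :=
      Real.summable_one_div_nat_pow.mpr (by norm_num)
    have h2 := (summable_nat_add_iff 1).mpr h1
    apply h2.congr
    intro n
    push_cast
    ring_nf
  have hZ : HasSum (fun n : ℕ => 1 / ((n : ℝ) + 1) ^ 3) Z := hsumm.hasSum
  -- HasSum of 1/k^3 over all of ℕ (k = 0 term is zero)
  have hH : HasSum (fun k : ℕ => 1 / (k : ℝ) ^ 3) Z := by
    have h' : HasSum (fun n : ℕ => 1 / ((n + 1 : ℕ) : ℝ) ^ 3) Z :=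
      amzv_hasSum_ext (fun n => by push_cast; ring_nf) hZ
    have := (hasSum_nat_add_iff (f := fun k : ℕ => 1 / (k : ℝ) ^ 3) 1).mp h'
    simpa using this
  -- even part
  have hEven : HasSum (fun n : ℕ => 1 / ((2 * n : ℕ) : ℝ) ^ 3) (Z / 8) := by
    have h8 : HasSum (fun n : ℕ => 1 / ((2 * (n + 1) : ℕ) : ℝ) ^ 3) (Z / 8) := by
      have h := hZ.mul_left (1 / 8)
      rw [show (1 : ℝ) / 8 * Z = Z / 8 by ring] at h
      refine amzv_hasSum_ext (fun n => ?_) h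
      push_cast
      rw [div_mul_div_comm, one_mul]
      congr 1
      ring
    have := (hasSum_nat_add_iff (f := fun n : ℕ => 1 / ((2 * n : ℕ) : ℝ) ^ 3) 1).mp
      (amzv_hasSum_ext (fun n => by norm_num [Nat.mul_add]) h8)
    simpa using this
  -- odd part
  have hinj : Function.Injective (fun n : ℕ => 2 * n + 1) := by
    intro a b h
    dsimp at h
    omega
  have hOddSummable : Summable (fun n : ℕ => 1 / ((2 * n + 1 : ℕ) : ℝ) ^ 3) :=
    hH.summable.comp_injective hinj
  obtain ⟨t, hOdd⟩ := hOddSummable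
  have ht : t = 7 / 8 * Z := by
    have htot : HasSum (fun k : ℕ => 1 / (k : ℝ) ^ 3) (Z / 8 + t) :=
      HasSum.even_add_odd (f := fun k : ℕ => 1 / (k : ℝ) ^ 3) hEven hOdd
    have := hH.unique htot
    linarith
  -- the alternating cubic series
  have hAlt3 : HasSum (fun k : ℕ => (-1 : ℝ) ^ k / (k : ℝ) ^ 3) (-(3 / 4) * Z) := by
    have he : HasSum (fun n : ℕ => (-1 : ℝ) ^ (2 * n) / ((2 * n : ℕ) : ℝ) ^ 3) (Z / 8) := by
      refine amzv_hasSum_ext (fun n => ?_) hEven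
      rw [Even.neg_one_pow ⟨n, by ring⟩]
    have ho : HasSum (fun n : ℕ => (-1 : ℝ) ^ (2 * n + 1) / ((2 * n + 1 : ℕ) : ℝ) ^ 3)
        (-(7 / 8 * Z)) := by
      rw [← ht]
      refine amzv_hasSum_ext (fun n => ?_) hOdd.neg
      rw [Odd.neg_one_pow ⟨n, rfl⟩]
      ring
    have h := HasSum.even_add_odd (f := fun k : ℕ => (-1 : ℝ) ^ k / (k : ℝ) ^ 3) he ho
    have heq : Z / 8 + -(7 / 8 * Z) = -(3 / 4) * Z := by ring
    rw [heq] at h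
    exact h
  -- the three partial-sum limits
  have hS1 : Tendsto (fun N : ℕ => ∑ k ∈ Icc 1 N, x k) atTop (𝓝 (-Real.log 2)) :=
    amzv_alt_harmonic_tendsto
  have hS2 : Tendsto (fun N : ℕ => ∑ k ∈ Icc 1 N, x k ^ 2) atTop (𝓝 (π ^ 2 / 6)) := by
    have h := amzv_sum_Icc_of_hasSum hasSum_zeta_two (by norm_num)
    apply h.congr
    intro N
    refine Finset.sum_congr rfl fun k _ => ?_
    simp only [hxdef]
    rw [div_pow, pow_right_comm, neg_one_sq, one_pow]
  have hS3 : Tendsto (fun N : ℕ => ∑ k ∈ Icc 1 N, x k ^ 3) atTop (𝓝 (-(3 / 4) * Z)) := by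
    have h := amzv_sum_Icc_of_hasSum hAlt3 (by norm_num)
    apply h.congr
    intro N
    refine Finset.sum_congr rfl fun k _ => ?_
    simp only [hxdef]
    rw [div_pow, pow_right_comm]
    norm_num
  -- combine
  have T : Tendsto
      (fun N : ℕ => ((∑ k ∈ Icc 1 N, x k) ^ 3
        - 3 * (∑ k ∈ Icc 1 N, x k) * (∑ k ∈ Icc 1 N, x k ^ 2)
        + 2 * ∑ k ∈ Icc 1 N, x k ^ 3) / 6) atTop
      (𝓝 (((-Real.log 2) ^ 3 - 3 * (-Real.log 2) * (π ^ 2 / 6)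
        + 2 * (-(3 / 4) * Z)) / 6)) :=
    (((hS1.pow 3).sub ((hS1.const_mul 3).mul hS2)).add (hS3.const_mul 2)).div_const 6
  have hval : ((-Real.log 2) ^ 3 - 3 * (-Real.log 2) * (π ^ 2 / 6) + 2 * (-(3 / 4) * Z)) / 6
      = -(Real.log 2) ^ 3 / 6 + π ^ 2 / 12 * Real.log 2 - Z / 4 := by ring
  rw [hval] at T
  apply T.congr
  intro N
  rw [← amzv_e3_formula x N]
  refine Finset.sum_congr rfl fun c _ => ?_
  refine Finset.sum_congr rfl fun b _ => ?_
  refine Finset.sum_congr rfl fun a _ => ?_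
  simp only [hxdef]
  rw [pow_add, pow_add, div_mul_div_comm, div_mul_div_comm]
end
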